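/- Pathwise convergence of square roots of Cox–Ingersoll–Ross paths to a reflected Ornstein–Uhlenbeck path (deterministic form of the paper's Theorem 2, sequence version): let y₀, b, σ > 0, and let B : [0,∞) → ℝ be continuous with B(0) = 0 and locally Hölder continuous, i.e. there exists λ ∈ (0,1) such that for every T > 0 there is Λ_T ≥ 0 with |B(t) − B(s)| ≤ Λ_T·|t − s|^λ for all s, t ∈ [0,T]. Let (εₙ)ₙ be a strictly decreasing sequence of positive reals with εₙ → 0, and for each n let Yₙ : [0,∞) → ℝ be continuous, strictly positive, and solve E(εₙ). Then: (1) for every t ≥ 0 the limit Y(t) := limₙ Yₙ(t) exists, is finite and nonnegative; (2) there is a function L : [0,∞) → ℝ, namely L(t) = limₙ (1/2)·∫₀ᵗ εₙ/Yₙ(s) ds, which is a reflection function for Y, and Y(t) = y₀ − (b/2)·∫₀ᵗ Y(s) ds + (σ/2)·B(t) + L(t) for all t ≥ 0; (3) for every T > 0, sup_{t∈[0,T]} |Y(t) − Yₙ(t)| → 0 and sup_{t∈[0,T]} |L(t) − (1/2)·∫₀ᵗ εₙ/Yₙ(s) ds| → 0 as n → ∞. -/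

import Mathlib

/-- `L` is a reflection function for `Y` on `[0, ∞)`: `L` is continuous, nondecreasing,
`L 0 = 0`, and `L` grows only at zeros of `Y`. -/
def IsReflectionFn (L Y : ℝ → ℝ) : Prop :=
  ContinuousOn L (Set.Ici 0) ∧ MonotoneOn L (Set.Ici 0) ∧ L 0 = 0 ∧
    ∀ s t : ℝ, 0 ≤ s → s ≤ t → (∀ u ∈ Set.Icc s t, 0 < Y u) → L t = L s

/-- A continuous, strictly positive `Y : [0, ∞) → ℝ` solves the singular equation `E(ε)`
if `Y t = y₀ + (1/2) ∫₀ᵗ (ε / Y s - b * Y s) ds + (σ/2) B t` for all `t ≥ 0`. -/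
def SolvesE (y₀ b σ : ℝ) (B : ℝ → ℝ) (ε : ℝ) (Y : ℝ → ℝ) : Prop :=
  ContinuousOn Y (Set.Ici 0) ∧ (∀ t, 0 ≤ t → 0 < Y t) ∧
    ∀ t, 0 ≤ t →
      Y t = y₀ + (1 / 2) * (∫ s in (0:ℝ)..t, (ε / Y s - b * Y s)) + (σ / 2) * B t

open MeasureTheory Filter Set intervalIntegral

section aux
variable {y₀ b σ ε : ℝ} {B Z : ℝ → ℝ}

lemma crp_cont_div (hc : ContinuousOn Z (Set.Ici 0)) (hp : ∀ t, 0 ≤ t → 0 < Z t)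
    {a t : ℝ} (ha : 0 ≤ a) (hat : a ≤ t) :
    ContinuousOn (fun s => ε / Z s) (Set.uIcc a t) := by
  have hsub : Set.uIcc a t ⊆ Set.Ici 0 := by
    rw [Set.uIcc_of_le hat]; exact fun x hx => le_trans ha hx.1
  exact (continuousOn_const.div (hc.mono hsub) (fun x hx => (hp x (hsub hx)).ne'))

lemma crp_int_div (hc : ContinuousOn Z (Set.Ici 0)) (hp : ∀ t, 0 ≤ t → 0 < Z t)
    {a t : ℝ} (ha : 0 ≤ a) (hat : a ≤ t) :
    IntervalIntegrable (fun s => ε / Z s) volume a t :=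
  (crp_cont_div hc hp ha hat).intervalIntegrable

lemma crp_int_Z (hc : ContinuousOn Z (Set.Ici 0))
    {a t : ℝ} (ha : 0 ≤ a) (hat : a ≤ t) :
    IntervalIntegrable Z volume a t := by
  have hsub : Set.uIcc a t ⊆ Set.Ici 0 := by
    rw [Set.uIcc_of_le hat]; exact fun x hx => le_trans ha hx.1
  exact (hc.mono hsub).intervalIntegrable

lemma crp_eq_split (hZ : SolvesE y₀ b σ B ε Z) {t : ℝ} (ht : 0 ≤ t) :
    Z t = y₀ + (1/2) * (∫ s in (0:ℝ)..t, ε / Z s)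
      - (b/2) * (∫ s in (0:ℝ)..t, Z s) + (σ/2) * B t := by
  have h1 := crp_int_div (ε := ε) hZ.1 hZ.2.1 le_rfl ht
  have h2 : IntervalIntegrable (fun s => b * Z s) volume 0 t :=
    (crp_int_Z hZ.1 le_rfl ht).const_mul b
  have heq := hZ.2.2 t ht
  rw [intervalIntegral.integral_sub h1 h2, intervalIntegral.integral_const_mul] at heq
  rw [heq]; ring

lemma crp_zero (hZ : SolvesE y₀ b σ B ε Z) (hB0 : B 0 = 0) : Z 0 = y₀ := by
  have := hZ.2.2 0 le_rfl
  rw [intervalIntegral.integral_same, hB0] at this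
  simpa using this

lemma crp_incr (hZ : SolvesE y₀ b σ B ε Z) {a t : ℝ} (ha : 0 ≤ a) (hat : a ≤ t) :
    Z t - Z a = (1/2) * (∫ s in a..t, ε / Z s)
      - (b/2) * (∫ s in a..t, Z s) + (σ/2) * (B t - B a) := by
  have ht : (0:ℝ) ≤ t := le_trans ha hat
  have e1 := crp_eq_split hZ ht
  have e2 := crp_eq_split hZ ha
  have d1 := intervalIntegral.integral_interval_sub_left
    (crp_int_div (ε := ε) hZ.1 hZ.2.1 le_rfl ht) (crp_int_div (ε := ε) hZ.1 hZ.2.1 le_rfl ha)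
  have d2 := intervalIntegral.integral_interval_sub_left
    (crp_int_Z hZ.1 le_rfl ht) (crp_int_Z hZ.1 le_rfl ha)
  rw [e1, e2, ← d1, ← d2]; ring

/-- Comparison: bigger `ε` gives bigger solution. -/
lemma crp_comp {ε₁ ε₂ : ℝ} {Z₁ Z₂ : ℝ → ℝ} (hB0 : B 0 = 0) (hb : 0 < b) (hε₂ : 0 < ε₂)
    (h1 : SolvesE y₀ b σ B ε₁ Z₁) (h2 : SolvesE y₀ b σ B ε₂ Z₂)
    (hε : ε₂ ≤ ε₁) {t : ℝ} (ht : 0 ≤ t) : Z₂ t ≤ Z₁ t := by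
  by_contra hcon
  push_neg at hcon
  set D : ℝ → ℝ := fun u => Z₁ u - Z₂ u with hD
  have hDc : ContinuousOn D (Set.Ici 0) := h1.1.sub h2.1
  have hD0 : D 0 = 0 := by simp [hD, crp_zero h1 hB0, crp_zero h2 hB0]
  have hDt : D t < 0 := sub_neg.mpr hcon
  set S : Set ℝ := Set.Icc 0 t ∩ D ⁻¹' {0} with hS
  have hScl : IsClosed S :=
    (hDc.mono (fun x hx => hx.1)).preimage_isClosed_of_isClosed isClosed_Icc
      isClosed_singleton
  have hSne : S.Nonempty := ⟨0, ⟨le_rfl, ht⟩, hD0⟩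
  have hSbdd : BddAbove S := ⟨t, fun x hx => hx.1.2⟩
  set t₀ := sSup S with ht₀
  have ht₀S : t₀ ∈ S := hScl.csSup_mem hSne hSbdd
  have ht₀0 : 0 ≤ t₀ := ht₀S.1.1
  have ht₀t : t₀ ≤ t := ht₀S.1.2
  have hDt₀ : D t₀ = 0 := ht₀S.2
  have ht₀lt : t₀ < t := lt_of_le_of_ne ht₀t (fun h => by rw [h] at hDt₀; linarith)
  have hneg : ∀ u ∈ Set.Ioc t₀ t, D u < 0 := by
    intro u hu
    have hu0 : 0 ≤ u := le_trans ht₀0 hu.1.le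
    rcases lt_trichotomy (D u) 0 with h | h | h
    · exact h
    · exact absurd (le_csSup hSbdd ⟨⟨hu0, hu.2⟩, h⟩) (not_le.mpr hu.1)
    · exfalso
      have hut : u < t := lt_of_le_of_ne hu.2 (fun h' => by rw [h'] at h; linarith)
      have hccc : ContinuousOn D (Set.Icc u t) :=
        hDc.mono (fun x hx => le_trans hu0 hx.1)
      obtain ⟨c, hc, hc0⟩ := intermediate_value_Icc' hut.le hccc
        (⟨hDt.le, h.le⟩ : (0:ℝ) ∈ Set.Icc (D t) (D u))
      have hcS : c ∈ S := ⟨⟨le_trans hu0 hc.1, hc.2⟩, hc0⟩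
      have := le_csSup hSbdd hcS
      have : t₀ < c := lt_of_lt_of_le hu.1 hc.1
      linarith [le_csSup hSbdd hcS]
  have hDle : ∀ u ∈ Set.Icc t₀ t, D u ≤ 0 := by
    intro u hu
    rcases eq_or_lt_of_le hu.1 with h | h
    · rw [← h]; exact le_of_eq hDt₀
    · exact (hneg u ⟨h, hu.2⟩).le
  have key : D t - D t₀ = (1/2) * (∫ s in t₀..t, (ε₁ / Z₁ s - ε₂ / Z₂ s))
      - (b/2) * (∫ s in t₀..t, D s) := by
    have i1 := crp_incr h1 ht₀0 ht₀t
    have i2 := crp_incr h2 ht₀0 ht₀t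
    have e1 : (∫ s in t₀..t, (ε₁ / Z₁ s - ε₂ / Z₂ s))
        = (∫ s in t₀..t, ε₁ / Z₁ s) - ∫ s in t₀..t, ε₂ / Z₂ s :=
      intervalIntegral.integral_sub (crp_int_div (ε := ε₁) h1.1 h1.2.1 ht₀0 ht₀t)
        (crp_int_div (ε := ε₂) h2.1 h2.2.1 ht₀0 ht₀t)
    have e2 : (∫ s in t₀..t, D s) = (∫ s in t₀..t, Z₁ s) - ∫ s in t₀..t, Z₂ s :=
      intervalIntegral.integral_sub (crp_int_Z h1.1 ht₀0 ht₀t) (crp_int_Z h2.1 ht₀0 ht₀t)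
    rw [e1, e2]
    simp only [hD] at i1 i2 ⊢
    linarith [i1, i2]
  have hA : 0 ≤ ∫ s in t₀..t, (ε₁ / Z₁ s - ε₂ / Z₂ s) := by
    apply intervalIntegral.integral_nonneg ht₀t
    intro u hu
    have hu0 : (0:ℝ) ≤ u := le_trans ht₀0 hu.1
    have hZ1p := h1.2.1 u hu0
    have hZ2p := h2.2.1 u hu0
    have hle : Z₁ u ≤ Z₂ u := by have := hDle u hu; simp only [hD] at this; linarith
    have : ε₂ / Z₂ u ≤ ε₁ / Z₁ u := div_le_div₀ (le_trans hε₂.le hε) hε hZ1p hle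
    linarith
  have hB : 0 < ∫ s in t₀..t, -D s := by
    apply intervalIntegral.intervalIntegral_pos_of_pos_on _ _ ht₀lt
    · exact ((crp_int_Z h1.1 ht₀0 ht₀t).sub (crp_int_Z h2.1 ht₀0 ht₀t)).neg
    · intro u hu
      have := hneg u ⟨hu.1, hu.2.le⟩
      simp only [hD] at this ⊢; linarith
  have hB' : (∫ s in t₀..t, D s) < 0 := by
    have : (∫ s in t₀..t, -D s) = -∫ s in t₀..t, D s := intervalIntegral.integral_neg
    linarith [hB, this ▸ hB]
  have hble : (b/2) * (∫ s in t₀..t, D s) < 0 :=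
    mul_neg_of_pos_of_neg (half_pos hb) hB'
  rw [hDt₀, sub_zero] at key
  rw [key] at hDt
  linarith [hA, hble]
end aux

/-- Uniform oscillation estimate. -/
lemma crp_osc {y₀ b σ ε : ℝ} {B Z : ℝ → ℝ} (hσ : 0 < σ)
    (hZ : SolvesE y₀ b σ B ε Z) (hε : 0 < ε)
    {lam Λ T M δ s t : ℝ} (hlam : 0 ≤ lam) (hΛ0 : 0 ≤ Λ)
    (hΛ : ∀ u ∈ Set.Icc (0:ℝ) T, ∀ v ∈ Set.Icc (0:ℝ) T, |B v - B u| ≤ Λ * |v - u| ^ lam)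
    (hM : ∀ u ∈ Set.Icc (0:ℝ) T, Z u ≤ M) (hδ : 0 < δ) (hb : 0 ≤ b)
    (hs : 0 ≤ s) (hst : s ≤ t) (htT : t ≤ T) :
    |Z t - Z s| ≤ σ/2 * Λ * (t-s)^lam + b/2 * M * (t-s) + δ + ε * (t-s) / (2*δ) := by
  have ht0 : (0:ℝ) ≤ t := le_trans hs hst
  have hsT : s ≤ T := le_trans hst htT
  have hZs : 0 < Z s := hZ.2.1 s hs
  have hMpos : 0 < M := lt_of_lt_of_le hZs (hM s ⟨hs, hsT⟩)
  have hBst : |B t - B s| ≤ Λ * (t - s) ^ lam := by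
    have := hΛ s ⟨hs, hsT⟩ t ⟨ht0, htT⟩
    rwa [abs_of_nonneg (sub_nonneg.mpr hst)] at this
  have hrw : (t - s) ^ lam = |t - s| ^ lam := by
    rw [abs_of_nonneg (sub_nonneg.mpr hst)]
  have hrpow_nonneg : 0 ≤ (t - s) ^ lam := by
    rw [hrw]; exact Real.rpow_nonneg (abs_nonneg _) _
  have hincr := crp_incr hZ hs hst
  have hdivpos : 0 ≤ ε * (t - s) / (2*δ) := div_nonneg (mul_nonneg hε.le (sub_nonneg.mpr hst)) (by linarith)
  -- Lower bound
  have hlow : -(σ/2 * Λ * (t-s)^lam + b/2 * M * (t-s)) ≤ Z t - Z s := by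
    have h1 : 0 ≤ ∫ u in s..t, ε / Z u := by
      apply intervalIntegral.integral_nonneg hst
      intro u hu
      exact (div_pos hε (hZ.2.1 u (le_trans hs hu.1))).le
    have h2 : (∫ u in s..t, Z u) ≤ M * (t - s) := by
      have := intervalIntegral.integral_mono_on hst (crp_int_Z hZ.1 hs hst)
        intervalIntegrable_const (fun u hu => hM u ⟨le_trans hs hu.1, le_trans hu.2 htT⟩)
      rwa [intervalIntegral.integral_const, smul_eq_mul, mul_comm] at this
    have h3 : -(σ/2 * Λ * (t-s)^lam) ≤ σ/2 * (B t - B s) := by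
      have : -(Λ * (t-s)^lam) ≤ B t - B s := neg_le_of_abs_le hBst
      calc -(σ/2 * Λ * (t-s)^lam) = σ/2 * (-(Λ * (t-s)^lam)) := by ring
        _ ≤ σ/2 * (B t - B s) := by
            apply mul_le_mul_of_nonneg_left this (by linarith)
    nlinarith [hincr, h1, h2, h3]
  -- Upper bound
  have hup : Z t - Z s ≤ σ/2 * Λ * (t-s)^lam + b/2 * M * (t-s) + δ + ε * (t-s) / (2*δ) := by
    set S : Set ℝ := insert s (Set.Icc s t ∩ Z ⁻¹' Set.Iic δ) with hSdef
    have hIccsub : Set.Icc s t ⊆ Set.Ici (0:ℝ) := fun x hx => le_trans hs hx.1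
    have hScl : IsClosed S := by
      apply IsClosed.union isClosed_singleton  -- insert = {s} ∪ _
      exact (hZ.1.mono hIccsub).preimage_isClosed_of_isClosed isClosed_Icc isClosed_Iic
    have hSne : S.Nonempty := ⟨s, Set.mem_insert _ _⟩
    have hSbdd : BddAbove S := by
      refine ⟨t, fun x hx => ?_⟩
      rcases hx with rfl | hx
      · exact hst
      · exact hx.1.2
    set u := sSup S with hu
    have huS : u ∈ S := hScl.csSup_mem hSne hSbdd
    have hsu : s ≤ u := le_csSup hSbdd (Set.mem_insert _ _)
    have hut : u ≤ t := by
      rcases Set.mem_insert_iff.mp huS with h | hx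
      · rw [h]; exact hst
      · exact hx.1.2
    have hu0 : 0 ≤ u := le_trans hs hsu
    have hZu : Z u ≤ Z s + δ := by
      rcases Set.mem_insert_iff.mp huS with h | hx
      · rw [h]; linarith
      · have := hx.2; simp only [Set.mem_preimage, Set.mem_Iic] at this; linarith
    have hgt : ∀ r ∈ Set.Ioc u t, δ ≤ Z r := by
      intro r hr
      by_contra hcon
      push_neg at hcon
      have : r ∈ S := Set.mem_insert_iff.mpr (Or.inr ⟨⟨le_trans hsu hr.1.le, hr.2⟩, hcon.le⟩)
      exact absurd (le_csSup hSbdd this) (not_le.mpr hr.1)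
    have hincr2 := crp_incr hZ hu0 hut
    have h1 : (∫ r in u..t, ε / Z r) ≤ ε / δ * (t - u) := by
      rw [intervalIntegral.integral_of_le hut]
      have hconst : (∫ r in Set.Ioc u t, (fun _ => ε/δ) r) = ε / δ * (t - u) := by
        rw [MeasureTheory.setIntegral_const, smul_eq_mul, mul_comm,
          Real.volume_real_Ioc_of_le hut]
      rw [← hconst]
      apply MeasureTheory.setIntegral_mono_on
      · exact (crp_int_div (ε := ε) hZ.1 hZ.2.1 hu0 hut).1
      · exact MeasureTheory.integrableOn_const (by
          rw [Real.volume_Ioc]; exact ENNReal.ofReal_ne_top)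
      · exact measurableSet_Ioc
      · intro r hr
        exact div_le_div_of_nonneg_left hε.le hδ (hgt r hr)
    have h2 : 0 ≤ ∫ r in u..t, Z r := by
      apply intervalIntegral.integral_nonneg hut
      intro r hr
      exact (hZ.2.1 r (le_trans hu0 hr.1)).le
    have h3 : σ/2 * (B t - B u) ≤ σ/2 * Λ * (t-s)^lam := by
      have hBut : |B t - B u| ≤ Λ * (t - u) ^ lam := by
        have := hΛ u ⟨hu0, le_trans hut htT⟩ t ⟨ht0, htT⟩
        rwa [abs_of_nonneg (sub_nonneg.mpr hut)] at this
      have hmono : (t - u) ^ lam ≤ (t - s) ^ lam :=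
        Real.rpow_le_rpow (sub_nonneg.mpr hut) (by linarith) hlam
      have : B t - B u ≤ Λ * (t-s)^lam :=
        le_trans (le_abs_self _) (le_trans hBut (mul_le_mul_of_nonneg_left hmono hΛ0))
      calc σ/2 * (B t - B u) ≤ σ/2 * (Λ * (t-s)^lam) :=
            mul_le_mul_of_nonneg_left this (by linarith)
        _ = σ/2 * Λ * (t-s)^lam := by ring
    have h4 : ε / δ * (t - u) ≤ 2 * (ε * (t - s) / (2*δ)) := by
      have : ε / δ * (t - u) ≤ ε / δ * (t - s) :=
        mul_le_mul_of_nonneg_left (by linarith) (by positivity)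
      calc ε / δ * (t - u) ≤ ε / δ * (t - s) := this
        _ = 2 * (ε * (t - s) / (2*δ)) := by field_simp
    have hb2 : 0 ≤ b/2 * ∫ r in u..t, Z r := mul_nonneg (by linarith) h2
    have hbM : 0 ≤ b/2 * M * (t - s) :=
      mul_nonneg (mul_nonneg (by linarith) hMpos.le) (sub_nonneg.mpr hst)
    linarith [hincr2, h1, h3, h4, hZu, hb2, hbM]
  rw [abs_le]
  exact ⟨by linarith [hlow], hup⟩ 

/-- Dini's theorem, special version. -/
lemma crp_dini {K : Set ℝ} (hK : IsCompact K) {f : ℕ → ℝ → ℝ} {g : ℝ → ℝ}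
    (hf : ∀ n, ContinuousOn (f n) K) (hg : ContinuousOn g K)
    (hanti : ∀ x ∈ K, Antitone fun n => f n x)
    (hlim : ∀ x ∈ K, Tendsto (fun n => f n x) atTop (nhds (g x))) :
    TendstoUniformlyOn f g atTop K := by
  rw [Metric.tendstoUniformlyOn_iff]
  intro e he
  have hge : ∀ n, ∀ x ∈ K, g x ≤ f n x := by
    intro n x hx
    exact le_of_tendsto (hlim x hx) (eventually_atTop.2 ⟨n, fun m hm => hanti x hx hm⟩)
  have hsel : ∀ x ∈ K, ∃ U : Set ℝ, IsOpen U ∧ x ∈ U ∧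
      ∃ N : ℕ, ∀ y ∈ U ∩ K, f N y - g y < e := by
    intro x hx
    obtain ⟨N, hN⟩ : ∃ N, f N x - g x < e := by
      have h2 := (hlim x hx).sub (tendsto_const_nhds (x := g x))
      rw [sub_self] at h2
      have := (h2.eventually (eventually_lt_nhds he)).exists
      exact this
    have hcont : ContinuousWithinAt (fun y => f N y - g y) K x := (((hf N).sub hg) x hx)
    have hmem : {y | f N y - g y < e} ∈ nhdsWithin x K :=
      hcont (Iio_mem_nhds hN)
    obtain ⟨U, hUo, hxU, hUsub⟩ := mem_nhdsWithin.mp hmem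
    exact ⟨U, hUo, hxU, N, fun y hy => hUsub ⟨hy.1, hy.2⟩⟩
  choose! U hUo hxU N hN using hsel
  obtain ⟨F, hFK, hcover⟩ := hK.elim_nhds_subcover U (fun x hx => (hUo x hx).mem_nhds (hxU x hx))
  refine eventually_atTop.mpr ⟨F.sup N, fun n hn y hy => ?_⟩
  obtain ⟨x, hxF, hyU⟩ : ∃ x ∈ F, y ∈ U x := by
    have := hcover hy
    simpa using this
  have hxK : x ∈ K := hFK x hxF
  have h1 : f n y ≤ f (N x) y := hanti y hy (le_trans (Finset.le_sup hxF) hn)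
  have h2 : f (N x) y - g y < e := hN x hxK y ⟨hyU, hy⟩
  have h3 : g y ≤ f n y := hge n y hy
  rw [Real.dist_eq, abs_of_nonpos (by linarith)]
  linarith

/-- Pathwise convergence of square roots of CIR paths to a reflected OU path
(deterministic form of the paper's Theorem 2, sequence version). -/
theorem stmt_11 (y₀ b σ : ℝ) (hy₀ : 0 < y₀) (hb : 0 < b) (hσ : 0 < σ)
    (B : ℝ → ℝ) (hBc : ContinuousOn B (Set.Ici 0)) (hB0 : B 0 = 0)
    (hHol : ∃ lam : ℝ, 0 < lam ∧ lam < 1 ∧ ∀ T, 0 < T → ∃ Λ, 0 ≤ Λ ∧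
      ∀ s ∈ Set.Icc (0:ℝ) T, ∀ t ∈ Set.Icc (0:ℝ) T, |B t - B s| ≤ Λ * |t - s| ^ lam)
    (εs : ℕ → ℝ) (hεpos : ∀ n, 0 < εs n) (hεdec : StrictAnti εs)
    (hεlim : Filter.Tendsto εs Filter.atTop (nhds 0))
    (Yn : ℕ → ℝ → ℝ) (hYn : ∀ n, SolvesE y₀ b σ B (εs n) (Yn n)) :
    ∃ Y L : ℝ → ℝ,
      (∀ t, 0 ≤ t →
        (0 ≤ Y t ∧ Filter.Tendsto (fun n => Yn n t) Filter.atTop (nhds (Y t))) ∧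
        Filter.Tendsto (fun n => (1 / 2) * ∫ s in (0:ℝ)..t, εs n / Yn n s)
          Filter.atTop (nhds (L t))) ∧
      IsReflectionFn L Y ∧
      (∀ t, 0 ≤ t →
        Y t = y₀ - (b / 2) * (∫ s in (0:ℝ)..t, Y s) + (σ / 2) * B t + L t) ∧
      (∀ T, 0 < T →
        TendstoUniformlyOn (fun n => Yn n) Y Filter.atTop (Set.Icc 0 T) ∧
        TendstoUniformlyOn (fun n t => (1 / 2) * ∫ s in (0:ℝ)..t, εs n / Yn n s) L
          Filter.atTop (Set.Icc 0 T)) := by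
  obtain ⟨lam, hlam0, hlam1, hHolT⟩ := hHol
  -- pointwise antitone limit
  have hanti : ∀ t, 0 ≤ t → Antitone (fun n => Yn n t) := fun t ht m n hmn =>
    crp_comp hB0 hb (hεpos n) (hYn m) (hYn n) (hεdec.antitone hmn) ht
  set Y : ℝ → ℝ := fun t => ⨅ n, Yn n t with hYdef
  have hbdd : ∀ t, 0 ≤ t → BddBelow (Set.range fun n => Yn n t) := by
    intro t ht
    exact ⟨0, fun x ⟨n, hn⟩ => hn ▸ ((hYn n).2.1 t ht).le⟩
  have hYtend : ∀ t, 0 ≤ t → Tendsto (fun n => Yn n t) atTop (nhds (Y t)) :=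
    fun t ht => tendsto_atTop_ciInf (hanti t ht) (hbdd t ht)
  have hYnonneg : ∀ t, 0 ≤ t → 0 ≤ Y t :=
    fun t ht => le_ciInf fun n => ((hYn n).2.1 t ht).le
  have hYleYn : ∀ n t, 0 ≤ t → Y t ≤ Yn n t := fun n t ht => ciInf_le (hbdd t ht) n
  have hY0 : Y 0 = y₀ := by
    have h0 : ∀ n, Yn n 0 = y₀ := fun n => crp_zero (hYn n) hB0
    simp only [hYdef, h0]
    exact ciInf_const
  -- per-horizon bound and modulus
  have hmodY : ∀ T, 0 < T → ∃ Λ M : ℝ, 0 ≤ Λ ∧ 0 < M ∧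
      (∀ n, ∀ u ∈ Set.Icc (0:ℝ) T, Yn n u ≤ M) ∧
      (∀ s t : ℝ, 0 ≤ s → s ≤ t → t ≤ T →
        |Y t - Y s| ≤ σ/2*Λ*(t-s)^lam + b/2*M*(t-s)) := by
    intro T hT
    obtain ⟨Λ, hΛ0, hΛ⟩ := hHolT T hT
    obtain ⟨C, hC⟩ := (isCompact_Icc : IsCompact (Set.Icc (0:ℝ) T)).exists_bound_of_continuousOn
      ((hYn 0).1.mono (fun x hx => hx.1))
    have hCpos : 0 < C := lt_of_lt_of_le ((hYn 0).2.1 0 le_rfl)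
      (le_trans (le_abs_self _) (hC 0 ⟨le_rfl, hT.le⟩))
    have hMb : ∀ n, ∀ u ∈ Set.Icc (0:ℝ) T, Yn n u ≤ C := by
      intro n u hu
      exact le_trans (hanti u hu.1 (Nat.zero_le n)) (le_trans (le_abs_self _) (hC u hu))
    refine ⟨Λ, C, hΛ0, hCpos, hMb, ?_⟩
    intro s t hs hst htT
    have key : ∀ δ : ℝ, 0 < δ →
        |Y t - Y s| ≤ σ/2*Λ*(t-s)^lam + b/2*C*(t-s) + δ := by
      intro δ hδ
      have htend1 : Tendsto (fun n => |Yn n t - Yn n s|) atTop (nhds (|Y t - Y s|)) :=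
        ((hYtend t (le_trans hs hst)).sub (hYtend s hs)).abs
      have htend2 : Tendsto
          (fun n => σ/2*Λ*(t-s)^lam + b/2*C*(t-s) + δ + εs n * (t-s) / (2*δ)) atTop
          (nhds (σ/2*Λ*(t-s)^lam + b/2*C*(t-s) + δ)) := by
        have h2 : Tendsto (fun n => εs n * (t-s) / (2*δ)) atTop (nhds 0) := by
          simpa using (hεlim.mul_const (t-s)).div_const (2*δ)
        simpa using (tendsto_const_nhds (x := σ/2*Λ*(t-s)^lam + b/2*C*(t-s) + δ)).add h2
      have hle : ∀ n, |Yn n t - Yn n s|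
          ≤ σ/2*Λ*(t-s)^lam + b/2*C*(t-s) + δ + εs n * (t-s) / (2*δ) :=
        fun n => crp_osc hσ (hYn n) (hεpos n) hlam0.le hΛ0 hΛ (hMb n) hδ hb.le hs hst htT
      exact le_of_tendsto_of_tendsto' htend1 htend2 hle
    exact le_of_forall_pos_le_add key
  -- continuity of Y
  have hYcont : ContinuousOn Y (Set.Ici 0) := by
    intro x hx
    have hx0 : (0:ℝ) ≤ x := hx
    obtain ⟨Λ, M, hΛ0, hM0, hMb, hmod⟩ := hmodY (x+1) (by linarith)
    rw [Metric.continuousWithinAt_iff]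
    intro e he
    have hcont : ContinuousAt (fun h : ℝ => σ/2*Λ*h^lam + b/2*M*h) 0 := by
      apply ContinuousAt.add
      · exact continuousAt_const.mul (Real.continuousAt_rpow_const 0 lam (Or.inr hlam0.le))
      · exact continuousAt_const.mul continuousAt_id
    have hval : σ/2*Λ*(0:ℝ)^lam + b/2*M*0 = 0 := by
      rw [Real.zero_rpow hlam0.ne']; ring
    obtain ⟨d, hd0, hd⟩ := Metric.continuousAt_iff.mp hcont e he
    refine ⟨min d 1, by positivity, ?_⟩
    intro y hy hdist
    have hphi : ∀ u v : ℝ, 0 ≤ u → u ≤ v → v ≤ x + 1 → |v - u| < d →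
        dist (Y v) (Y u) < e := by
      intro u v hu huv hvx hlt
      have h1 := hmod u v hu huv hvx
      have h2 := hd (show dist (v - u) 0 < d by rwa [Real.dist_eq, sub_zero])
      simp only [hval] at h2
      rw [Real.dist_eq, sub_zero] at h2
      rw [Real.dist_eq]
      calc |Y v - Y u| ≤ σ/2*Λ*(v-u)^lam + b/2*M*(v-u) := h1
        _ ≤ |σ/2*Λ*(v-u)^lam + b/2*M*(v-u)| := le_abs_self _
        _ < e := h2
    have hdd : dist y x < d := lt_of_lt_of_le hdist (min_le_left _ _)
    have hd1 : dist y x < 1 := lt_of_lt_of_le hdist (min_le_right _ _)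
    rw [Real.dist_eq] at hdd hd1
    rcases le_total x y with hxy | hxy
    · exact hphi x y hx0 hxy
        (by have h' : y - x ≤ |y - x| := le_abs_self _; linarith) hdd
    · rw [dist_comm]
      exact hphi y x hy hxy (by linarith) (by rwa [abs_sub_comm] at hdd)
  -- uniform convergence of Yn
  have hYnunif : ∀ T, 0 < T → TendstoUniformlyOn (fun n => Yn n) Y atTop (Set.Icc 0 T) := by
    intro T hT
    apply crp_dini isCompact_Icc
      (fun n => (hYn n).1.mono (fun x hx => hx.1))
      (hYcont.mono (fun x hx => hx.1))
      (fun x hx => hanti x hx.1)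
      (fun x hx => hYtend x hx.1)
  -- identity for the approximate local times
  have hLn_eq : ∀ n, ∀ t : ℝ, 0 ≤ t → (1/2) * (∫ s in (0:ℝ)..t, εs n / Yn n s)
      = Yn n t - y₀ + (b/2) * (∫ s in (0:ℝ)..t, Yn n s) - (σ/2) * B t := by
    intro n t ht
    have := crp_eq_split (hYn n) ht
    linarith
  have hYint : ∀ t : ℝ, 0 ≤ t → IntervalIntegrable Y volume 0 t :=
    fun t ht => crp_int_Z hYcont le_rfl ht
  set L : ℝ → ℝ := fun t => Y t - y₀ + (b/2) * (∫ s in (0:ℝ)..t, Y s) - (σ/2) * B t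
    with hLdef
  -- uniform convergence of the approximate local times
  have hLunif : ∀ T, 0 < T → TendstoUniformlyOn
      (fun n t => (1/2) * ∫ s in (0:ℝ)..t, εs n / Yn n s) L atTop (Set.Icc 0 T) := by
    intro T hT
    rw [Metric.tendstoUniformlyOn_iff]
    intro e he
    have he' : 0 < e / (2 * (1 + b/2 * T)) := by positivity
    filter_upwards [Metric.tendstoUniformlyOn_iff.mp (hYnunif T hT) _ he'] with n hn
    intro x hx
    set e' := e / (2 * (1 + b/2 * T)) with he'def
    have hid := hLn_eq n x hx.1
    have hintYn := crp_int_Z (hYn n).1 le_rfl hx.1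
    have hbound : |(∫ s in (0:ℝ)..x, Y s) - ∫ s in (0:ℝ)..x, Yn n s| ≤ e' * T := by
      rw [← intervalIntegral.integral_sub (hYint x hx.1) hintYn]
      have h1 : ∀ u ∈ Set.uIoc (0:ℝ) x, ‖Y u - Yn n u‖ ≤ e' := by
        intro u hu
        rw [Set.uIoc_of_le hx.1] at hu
        have := hn u ⟨hu.1.le, le_trans hu.2 hx.2⟩
        rw [Real.dist_eq] at this
        rw [Real.norm_eq_abs]
        exact this.le
      have h2 := intervalIntegral.norm_integral_le_of_norm_le_const h1
      rw [Real.norm_eq_abs, sub_zero, abs_of_nonneg hx.1] at h2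
      exact le_trans h2 (mul_le_mul_of_nonneg_left hx.2 he'.le)
    rw [Real.dist_eq, hid]
    have hrw : L x - (Yn n x - y₀ + (b/2) * (∫ s in (0:ℝ)..x, Yn n s) - (σ/2) * B x)
        = (Y x - Yn n x) + (b/2) * ((∫ s in (0:ℝ)..x, Y s) - ∫ s in (0:ℝ)..x, Yn n s) := by
      simp only [hLdef]; ring
    rw [hrw]
    have hYx := hn x hx
    rw [Real.dist_eq] at hYx
    have htri : |(Y x - Yn n x) + (b/2) * ((∫ s in (0:ℝ)..x, Y s) - ∫ s in (0:ℝ)..x, Yn n s)|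
        ≤ |Y x - Yn n x| + (b/2) * |(∫ s in (0:ℝ)..x, Y s) - ∫ s in (0:ℝ)..x, Yn n s| := by
      calc _ ≤ |Y x - Yn n x| + |(b/2) * ((∫ s in (0:ℝ)..x, Y s) - ∫ s in (0:ℝ)..x, Yn n s)| :=
            abs_add_le _ _
        _ = _ := by rw [abs_mul, abs_of_nonneg (by linarith : (0:ℝ) ≤ b/2)]
    have harith : e' + (b/2) * (e' * T) < e := by
      have hden : (0:ℝ) < 1 + b/2 * T := by positivity
      have : e' * (1 + b/2 * T) = e / 2 := by
        rw [he'def]; field_simp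
      nlinarith [this, he]
    have hb2 : (b/2) * |(∫ s in (0:ℝ)..x, Y s) - ∫ s in (0:ℝ)..x, Yn n s| ≤ (b/2) * (e' * T) :=
      mul_le_mul_of_nonneg_left hbound (by linarith)
    calc |(Y x - Yn n x) + (b/2) * ((∫ s in (0:ℝ)..x, Y s) - ∫ s in (0:ℝ)..x, Yn n s)|
        ≤ |Y x - Yn n x| + (b/2) * |(∫ s in (0:ℝ)..x, Y s) - ∫ s in (0:ℝ)..x, Yn n s| := htri
      _ ≤ e' + (b/2) * (e' * T) := by
          have := hYx.le
          rw [abs_sub_comm] at this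
          linarith
      _ < e := harith
  have hLtend : ∀ t : ℝ, 0 ≤ t → Tendsto (fun n => (1/2) * ∫ s in (0:ℝ)..t, εs n / Yn n s)
      atTop (nhds (L t)) := by
    intro t ht
    have h := (hLunif (t+1) (by linarith)).tendsto_at (⟨ht, by linarith⟩ : t ∈ Set.Icc 0 (t+1))
    exact h
  -- increments of the approximate local times
  have hLn_incr : ∀ n, ∀ s t : ℝ, 0 ≤ s → s ≤ t →
      (1/2) * (∫ u in (0:ℝ)..t, εs n / Yn n u) - (1/2) * (∫ u in (0:ℝ)..s, εs n / Yn n u)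
      = (1/2) * ∫ u in s..t, εs n / Yn n u := by
    intro n s t hs hst
    have := intervalIntegral.integral_interval_sub_left
      (crp_int_div (ε := εs n) (hYn n).1 (hYn n).2.1 le_rfl (le_trans hs hst))
      (crp_int_div (ε := εs n) (hYn n).1 (hYn n).2.1 le_rfl hs)
    rw [← this]; ring
  have hLn_mono : ∀ n, ∀ s t : ℝ, 0 ≤ s → s ≤ t →
      (1/2) * (∫ u in (0:ℝ)..s, εs n / Yn n u) ≤ (1/2) * ∫ u in (0:ℝ)..t, εs n / Yn n u := by
    intro n s t hs hst
    have hnn : 0 ≤ ∫ u in s..t, εs n / Yn n u :=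
      intervalIntegral.integral_nonneg hst
        (fun u hu => (div_pos (hεpos n) ((hYn n).2.1 u (le_trans hs hu.1))).le)
    have := hLn_incr n s t hs hst
    linarith
  -- L is monotone on [0, ∞)
  have hLmono : MonotoneOn L (Set.Ici 0) := by
    intro s hs t ht hst
    exact le_of_tendsto_of_tendsto' (hLtend s hs) (hLtend t ht)
      (fun n => hLn_mono n s t hs hst)
  -- L 0 = 0
  have hL0 : L 0 = 0 := by
    simp only [hLdef, hY0, hB0, intervalIntegral.integral_same]
    ring
  -- continuity of L
  have hLcont : ContinuousOn L (Set.Ici 0) := by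
    have hprim : ContinuousOn (fun t => ∫ s in (0:ℝ)..t, Y s) (Set.Ici 0) := by
      intro x hx
      have hx0 : (0:ℝ) ≤ x := hx
      have hx1 : (0:ℝ) ≤ x + 1 := by linarith
      have hInt : MeasureTheory.IntegrableOn Y (Set.uIcc 0 (x+1)) volume := by
        rw [Set.uIcc_of_le hx1]
        exact (hYcont.mono (fun u hu => hu.1)).integrableOn_Icc
      have h1 := intervalIntegral.continuousOn_primitive_interval hInt
      have hxmem : x ∈ Set.uIcc 0 (x+1) := by
        rw [Set.uIcc_of_le hx1]; exact ⟨hx0, by linarith⟩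
      refine (h1 x hxmem).mono_of_mem_nhdsWithin ?_
      rw [Set.uIcc_of_le hx1, mem_nhdsWithin]
      refine ⟨Set.Iio (x+1), isOpen_Iio, by simp, fun y hy => ⟨hy.2, hy.1.le⟩⟩
    have : ContinuousOn (fun t => Y t - y₀ + (b/2) * (∫ s in (0:ℝ)..t, Y s) - (σ/2) * B t)
        (Set.Ici 0) :=
      ((hYcont.sub continuousOn_const).add (continuousOn_const.mul hprim)).sub
        (continuousOn_const.mul hBc)
    exact this
  -- flatness off the zero set
  have hflat : ∀ s t : ℝ, 0 ≤ s → s ≤ t → (∀ u ∈ Set.Icc s t, 0 < Y u) → L t = L s := by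
    intro s t hs hst hpos
    rcases eq_or_lt_of_le hst with rfl | hstlt
    · rfl
    have ht0 : (0:ℝ) ≤ t := le_trans hs hst
    obtain ⟨m, hm, hmin⟩ := (isCompact_Icc : IsCompact (Set.Icc s t)).exists_isMinOn
      ⟨s, le_rfl, hst⟩ (hYcont.mono (fun u hu => le_trans hs hu.1))
    have hδ : 0 < Y m := hpos m hm
    have hub : ∀ n, (1/2) * (∫ u in (0:ℝ)..t, εs n / Yn n u)
        - (1/2) * (∫ u in (0:ℝ)..s, εs n / Yn n u) ≤ εs n / Y m / 2 * (t - s) := by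
      intro n
      rw [hLn_incr n s t hs hst]
      have hmono := intervalIntegral.integral_mono_on hst
        (crp_int_div (ε := εs n) (hYn n).1 (hYn n).2.1 hs hst) intervalIntegrable_const
        (fun u hu => by
          have hYu : Y m ≤ Yn n u :=
            le_trans (isMinOn_iff.mp hmin u hu) (hYleYn n u (le_trans hs hu.1))
          exact div_le_div_of_nonneg_left (hεpos n).le hδ hYu)
      rw [intervalIntegral.integral_const, smul_eq_mul] at hmono
      calc (1/2) * (∫ u in s..t, εs n / Yn n u) ≤ (1/2) * ((t - s) * (εs n / Y m)) := by
            linarith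
        _ = εs n / Y m / 2 * (t - s) := by ring
    have hlb : ∀ n, 0 ≤ (1/2) * (∫ u in (0:ℝ)..t, εs n / Yn n u)
        - (1/2) * ∫ u in (0:ℝ)..s, εs n / Yn n u :=
      fun n => sub_nonneg.mpr (hLn_mono n s t hs hst)
    have htendsub : Tendsto (fun n => (1/2) * (∫ u in (0:ℝ)..t, εs n / Yn n u)
        - (1/2) * ∫ u in (0:ℝ)..s, εs n / Yn n u) atTop (nhds (L t - L s)) :=
      (hLtend t ht0).sub (hLtend s hs)
    have htend0 : Tendsto (fun n => εs n / Y m / 2 * (t - s)) atTop (nhds 0) := by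
      simpa using ((hεlim.div_const (Y m)).div_const 2).mul_const (t - s)
    have h1 : L t - L s ≤ 0 := le_of_tendsto_of_tendsto' htendsub htend0 hub
    have h2 : 0 ≤ L t - L s := le_of_tendsto_of_tendsto' tendsto_const_nhds htendsub hlb
    linarith
  refine ⟨Y, L, ?_, ⟨hLcont, hLmono, hL0, hflat⟩, ?_, ?_⟩
  · exact fun t ht => ⟨⟨hYnonneg t ht, hYtend t ht⟩, hLtend t ht⟩
  · intro t ht
    simp only [hLdef]
    ring
  · exact fun T hT => ⟨hYnunif T hT, hLunif T hT⟩
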